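/- Let K be a strictly convex centrally symmetric convex body in ℝⁿ and let x₁,…,x_m (m ≥ 2) be points outside the interior of K, with consecutive points distinct, whose convex hull contains 0. If the K-length of the closed polygon x₁⋯x_m equals 4, then m = 2 and x₂ = −x₁ with x₁ ∈ ∂K. -/

import Mathlib

open Finset Real Topology

set_option maxHeartbeats 2000000

noncomputable def QB (v : ℝ) : ℝ := Int.fract v ^ 2 - Int.fract v + 1/6

lemma QB_neg (v : ℝ) : QB (-v) = QB v := by
  unfold QB
  rcases eq_or_ne (Int.fract v) 0 with h | h
  · rw [h, Int.fract_neg_eq_zero.mpr h]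
  · rw [Int.fract_neg h]; ring

lemma bern2_eval (y : ℝ) :
    (Polynomial.map (algebraMap ℚ ℝ) (Polynomial.bernoulli 2)).eval y = y^2 - y + 1/6 := by
  have hb2 : _root_.bernoulli 2 = 1/6 := by
    rw [bernoulli_eq_bernoulli'_of_ne_one (by norm_num), bernoulli'_two]
  simp [Polynomial.bernoulli, Finset.sum_range_succ, Polynomial.eval_finset_sum, hb2]
  norm_num
  ring

lemma QB_hasSum (v : ℝ) :
    HasSum (fun k : ℕ => 1 / (k:ℝ)^2 * Real.cos (2 * π * k * v)) (π^2 * QB v) := by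
  have hx : Int.fract v ∈ Set.Icc (0:ℝ) 1 := ⟨Int.fract_nonneg v, (Int.fract_lt_one v).le⟩
  have h := hasSum_one_div_nat_pow_mul_cos (k := 1) one_ne_zero hx
  have hcos : ∀ k : ℕ, Real.cos (2*π*k*Int.fract v) = Real.cos (2*π*k*v) := by
    intro k
    have harg : 2*π*k*Int.fract v = 2*π*k*v + (-(k*⌊v⌋) : ℤ) * (2*π) := by
      rw [Int.fract]; push_cast; ring
    rw [harg, Real.cos_add_int_mul_two_pi]
  have heval := bern2_eval (Int.fract v)
  have hval : (-1:ℝ)^(1+1) * (2*π)^(2*1)/2/(Nat.factorial (2*1)) *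
      (Polynomial.map (algebraMap ℚ ℝ) (Polynomial.bernoulli (2*1))).eval (Int.fract v)
      = π^2 * QB v := by
    show (-1:ℝ)^(1+1) * (2*π)^(2*1)/2/(Nat.factorial 2) *
      (Polynomial.map (algebraMap ℚ ℝ) (Polynomial.bernoulli 2)).eval (Int.fract v) = _
    rw [heval]
    unfold QB
    have h2 : ((Nat.factorial 2 : ℕ) : ℝ) = 2 := by norm_num [Nat.factorial]
    rw [h2]
    ring
  have hfun : (fun n : ℕ => 1/(n:ℝ)^(2*1) * Real.cos (2*π*n*Int.fract v))
      = (fun k : ℕ => 1/(k:ℝ)^2 * Real.cos (2*π*k*v)) := by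
    funext k; rw [hcos k]
  rw [hfun, hval] at h
  exact h

noncomputable def RB (v : ℝ) : ℝ := 1/4 - 2 * QB v + QB (2*v) / 2

lemma RB_neg (v : ℝ) : RB (-v) = RB v := by
  unfold RB
  rw [show 2 * -v = -(2*v) by ring, QB_neg, QB_neg]

lemma RB_eq {v : ℝ} (h0 : 0 ≤ v) (h1 : v ≤ 1) : RB v = min v (1 - v) := by
  unfold RB QB
  rcases lt_or_ge v (1/2) with hv | hv
  · rw [Int.fract_eq_self.mpr ⟨h0, by linarith⟩,
      Int.fract_eq_self.mpr ⟨by linarith, by linarith⟩,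
      min_eq_left (by linarith)]
    ring
  · rcases eq_or_lt_of_le h1 with rfl | hv1
    · rw [Int.fract_one, show (2:ℝ)*1 = ((2:ℤ):ℝ) by norm_num, Int.fract_intCast,
        min_eq_right (by norm_num : (1:ℝ) - 1 ≤ 1)]
      norm_num
    · have h2 : Int.fract (2*v) = 2*v - 1 := by
        have harg : (2*v) = (2*v - 1) + ((1:ℤ):ℝ) := by push_cast; ring
        rw [show Int.fract (2*v) = Int.fract ((2*v-1) + ((1:ℤ):ℝ)) by rw [← harg],
          Int.fract_add_intCast, Int.fract_eq_self.mpr ⟨by linarith, by linarith⟩]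
      rw [Int.fract_eq_self.mpr ⟨h0, hv1⟩, h2, min_eq_right (by linarith)]
      ring

lemma RB_abs {v : ℝ} (h : |v| ≤ 1) : RB v = min |v| (1 - |v|) := by
  rcases le_or_gt 0 v with hv | hv
  · rw [abs_of_nonneg hv] at h ⊢; exact RB_eq hv h
  · rw [abs_of_neg hv] at h ⊢; rw [← RB_neg]; exact RB_eq (by linarith) h

section Kernel

variable {ι : Type*}

lemma cos_kernel (F : Finset ι) (c t : ι → ℝ) (θ : ℝ) :
    ∑ y ∈ F, ∑ z ∈ F, c y * c z * Real.cos (θ * (t y - t z))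
    = (∑ y ∈ F, c y * Real.cos (θ * t y))^2 + (∑ y ∈ F, c y * Real.sin (θ * t y))^2 := by
  rw [sq, sq, Finset.sum_mul_sum, Finset.sum_mul_sum, ← Finset.sum_add_distrib]
  refine Finset.sum_congr rfl fun y _ => ?_
  rw [← Finset.sum_add_distrib]
  refine Finset.sum_congr rfl fun z _ => ?_
  rw [mul_sub, Real.cos_sub]
  ring

lemma kernel_psd (F : Finset ι) (c t : ι → ℝ) :
    0 ≤ ∑ y ∈ F, ∑ z ∈ F, c y * c z * (2 * QB (t y - t z) - QB (2*(t y - t z)) / 2) := by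
  classical
  set C : ℕ → ℝ := fun k => ∑ y ∈ F, ∑ z ∈ F, c y * c z * Real.cos (2*π*k*(t y - t z)) with hC
  set f : ℕ → ℝ := fun k => 1/(k:ℝ)^2 * C k with hf
  set S₁ : ℝ := ∑ y ∈ F, ∑ z ∈ F, c y * c z * QB (t y - t z) with hS₁
  set S₂ : ℝ := ∑ y ∈ F, ∑ z ∈ F, c y * c z * QB (2*(t y - t z)) with hS₂
  have hCnn : ∀ k : ℕ, 0 ≤ C k := by
    intro k
    show 0 ≤ ∑ y ∈ F, ∑ z ∈ F, c y * c z * Real.cos (2*π*(k:ℝ)*(t y - t z))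
    rw [cos_kernel F c t (2*π*k)]
    positivity
  have h1 : HasSum f (π^2 * S₁) := by
    have hy : ∀ y ∈ F, HasSum
        (fun k : ℕ => ∑ z ∈ F, c y * c z * (1/(k:ℝ)^2 * Real.cos (2*π*k*(t y - t z))))
        (∑ z ∈ F, c y * c z * (π^2 * QB (t y - t z))) :=
      fun y _ => hasSum_sum (fun z _ => (QB_hasSum (t y - t z)).mul_left (c y * c z))
    have h := hasSum_sum hy
    have hfun : (fun k : ℕ => ∑ y ∈ F, ∑ z ∈ F,
        c y * c z * (1/(k:ℝ)^2 * Real.cos (2*π*k*(t y - t z)))) = f := by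
      funext k
      show _ = 1/(k:ℝ)^2 * ∑ y ∈ F, ∑ z ∈ F, c y * c z * Real.cos (2*π*(k:ℝ)*(t y - t z))
      rw [Finset.mul_sum]
      refine Finset.sum_congr rfl fun y _ => ?_
      rw [Finset.mul_sum]
      exact Finset.sum_congr rfl fun z _ => by ring
    have hval : ∑ y ∈ F, ∑ z ∈ F, c y * c z * (π^2 * QB (t y - t z)) = π^2 * S₁ := by
      show _ = π^2 * ∑ y ∈ F, ∑ z ∈ F, c y * c z * QB (t y - t z)
      rw [Finset.mul_sum]
      refine Finset.sum_congr rfl fun y _ => ?_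
      rw [Finset.mul_sum]
      exact Finset.sum_congr rfl fun z _ => by ring
    rwa [hfun, hval] at h
  have h2 : HasSum (fun k : ℕ => 1/(k:ℝ)^2 * C (2*k)) (π^2 * S₂) := by
    have hy : ∀ y ∈ F, HasSum
        (fun k : ℕ => ∑ z ∈ F, c y * c z * (1/(k:ℝ)^2 * Real.cos (2*π*k*(2*(t y - t z)))))
        (∑ z ∈ F, c y * c z * (π^2 * QB (2*(t y - t z)))) :=
      fun y _ => hasSum_sum (fun z _ => (QB_hasSum (2*(t y - t z))).mul_left (c y * c z))
    have h := hasSum_sum hy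
    have hfun : (fun k : ℕ => ∑ y ∈ F, ∑ z ∈ F,
        c y * c z * (1/(k:ℝ)^2 * Real.cos (2*π*k*(2*(t y - t z)))))
        = (fun k : ℕ => 1/(k:ℝ)^2 * C (2*k)) := by
      funext k
      show _ = 1/(k:ℝ)^2 * ∑ y ∈ F, ∑ z ∈ F, c y * c z * Real.cos (2*π*((2*k : ℕ):ℝ)*(t y - t z))
      rw [Finset.mul_sum]
      refine Finset.sum_congr rfl fun y _ => ?_
      rw [Finset.mul_sum]
      refine Finset.sum_congr rfl fun z _ => ?_
      have harg : 2*π*((2*k : ℕ):ℝ)*(t y - t z) = 2*π*(k:ℝ)*(2*(t y - t z)) := by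
        push_cast; ring
      rw [harg]; ring
    have hval : ∑ y ∈ F, ∑ z ∈ F, c y * c z * (π^2 * QB (2*(t y - t z))) = π^2 * S₂ := by
      show _ = π^2 * ∑ y ∈ F, ∑ z ∈ F, c y * c z * QB (2*(t y - t z))
      rw [Finset.mul_sum]
      refine Finset.sum_congr rfl fun y _ => ?_
      rw [Finset.mul_sum]
      exact Finset.sum_congr rfl fun z _ => by ring
    rwa [hfun, hval] at h
  have hfnn : ∀ k, 0 ≤ f k := by
    intro k
    show 0 ≤ 1/(k:ℝ)^2 * C k
    have := hCnn k
    positivity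
  have hdbl : (fun k : ℕ => 1/(k:ℝ)^2 * C (2*k)) = (fun k : ℕ => 4 * (f ∘ (fun j => 2*j)) k) := by
    funext k
    rcases Nat.eq_zero_or_pos k with rfl | hk
    · simp [hf]
    · have hkr : ((k:ℝ))^2 ≠ 0 := by positivity
      have h2k : (((2*k : ℕ)):ℝ)^2 = 4*(k:ℝ)^2 := by push_cast; ring
      simp only [Function.comp, hf, h2k]
      field_simp
  have hcompsum : Summable ((f ∘ (fun j : ℕ => 2*j))) :=
    h1.summable.comp_injective (fun a b h => by omega)
  have hle : tsum (f ∘ (fun j : ℕ => 2*j)) ≤ tsum f :=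
    tsum_comp_le_tsum_of_inj h1.summable hfnn (fun a b h => by omega)
  have ht1 : tsum f = π^2 * S₁ := h1.tsum_eq
  have ht2 : tsum (fun k : ℕ => 1/(k:ℝ)^2 * C (2*k)) = π^2 * S₂ := h2.tsum_eq
  have ht2' : 4 * tsum (f ∘ (fun j : ℕ => 2*j)) = π^2 * S₂ := by
    rw [← ht2, hdbl, tsum_mul_left]
  have hexp : ∑ y ∈ F, ∑ z ∈ F, c y * c z * (2 * QB (t y - t z) - QB (2*(t y - t z)) / 2)
      = 2 * S₁ - S₂ / 2 := by
    show _ = 2 * (∑ y ∈ F, ∑ z ∈ F, c y * c z * QB (t y - t z))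
      - (∑ y ∈ F, ∑ z ∈ F, c y * c z * QB (2*(t y - t z))) / 2
    rw [Finset.mul_sum, Finset.sum_div, ← Finset.sum_sub_distrib]
    refine Finset.sum_congr rfl fun y _ => ?_
    rw [Finset.mul_sum, Finset.sum_div, ← Finset.sum_sub_distrib]
    exact Finset.sum_congr rfl fun z _ => by ring
  rw [hexp]
  have hπ : (0:ℝ) < π^2 := by positivity
  nlinarith [hle, ht1, ht2']

lemma circle_bound (F : Finset ι) (w t : ι → ℝ) :
    ∑ y ∈ F, ∑ z ∈ F, w y * w z * RB (t y - t z) ≤ (∑ y ∈ F, w y)^2 / 4 := by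
  have h := kernel_psd F w t
  have hexp : ∑ y ∈ F, ∑ z ∈ F, w y * w z * RB (t y - t z)
      = (∑ y ∈ F, w y)^2 / 4
        - ∑ y ∈ F, ∑ z ∈ F, w y * w z * (2 * QB (t y - t z) - QB (2*(t y - t z)) / 2) := by
    rw [sq, Finset.sum_mul_sum, Finset.sum_div, ← Finset.sum_sub_distrib]
    refine Finset.sum_congr rfl fun y _ => ?_
    rw [Finset.sum_div, ← Finset.sum_sub_distrib]
    refine Finset.sum_congr rfl fun z _ => ?_
    unfold RB
    ring
  rw [hexp]
  linarith

end Kernel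

section GaugeFacts

variable {E : Type*} [NormedAddCommGroup E] [NormedSpace ℝ E] {K : Set E}

lemma my_gauge_sum_le (hKconv : Convex ℝ K) (habs : Absorbent ℝ K) {ι : Type*} (F : Finset ι)
    (f : ι → E) : gauge K (∑ i ∈ F, f i) ≤ ∑ i ∈ F, gauge K (f i) := by
  classical
  induction F using Finset.cons_induction with
  | empty => simp
  | cons a F ha ih =>
    rw [Finset.sum_cons, Finset.sum_cons]
    exact le_trans (gauge_add_le hKconv habs _ _) (by linarith)

lemma gauge_strict_align (hKconv : Convex ℝ K) (hKcpt : IsCompact K)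
    (hK0 : (0:E) ∈ interior K) (hKstrict : StrictConvex ℝ K)
    {u v : E} (hu : u ≠ 0) (hv : v ≠ 0)
    (h : gauge K (u + v) = gauge K u + gauge K v) :
    ∃ c : ℝ, 0 < c ∧ v = c • u := by
  have hnhds : K ∈ 𝓝 (0:E) := mem_interior_iff_mem_nhds.1 hK0
  have habs : Absorbent ℝ K := absorbent_nhds_zero hnhds
  have hbdd : Bornology.IsVonNBounded ℝ K :=
    (NormedSpace.isVonNBounded_iff _).mpr hKcpt.isBounded
  have hgu : 0 < gauge K u := (gauge_pos habs hbdd).mpr hu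
  have hgv : 0 < gauge K v := (gauge_pos habs hbdd).mpr hv
  have hmem : ∀ w : E, gauge K w ≤ 1 → w ∈ K := fun w hw => by
    have := (gauge_le_one_iff_mem_closure hKconv hnhds).mp hw
    rwa [hKcpt.isClosed.closure_eq] at this
  have hgU : gauge K ((gauge K u)⁻¹ • u) = 1 := by
    rw [gauge_smul_of_nonneg (inv_nonneg.mpr hgu.le), smul_eq_mul, inv_mul_cancel₀ hgu.ne']
  have hgV : gauge K ((gauge K v)⁻¹ • v) = 1 := by
    rw [gauge_smul_of_nonneg (inv_nonneg.mpr hgv.le), smul_eq_mul, inv_mul_cancel₀ hgv.ne']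
  have hUK : (gauge K u)⁻¹ • u ∈ K := hmem _ hgU.le
  have hVK : (gauge K v)⁻¹ • v ∈ K := hmem _ hgV.le
  by_cases hUV : (gauge K u)⁻¹ • u = (gauge K v)⁻¹ • v
  · refine ⟨gauge K v / gauge K u, by positivity, ?_⟩
    have : gauge K v • (gauge K u)⁻¹ • u = gauge K v • (gauge K v)⁻¹ • v := by rw [hUV]
    rw [smul_smul, smul_smul, mul_inv_cancel₀ hgv.ne', one_smul] at this
    rw [div_eq_mul_inv]
    exact this.symm
  · exfalso
    have hsum : 0 < gauge K u + gauge K v := by positivity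
    have hab : gauge K u / (gauge K u + gauge K v) + gauge K v / (gauge K u + gauge K v) = 1 := by
      field_simp
    have hint := hKstrict hUK hVK hUV (by positivity) (by positivity) hab
    have hcalc : (gauge K u / (gauge K u + gauge K v)) • (gauge K u)⁻¹ • u
        + (gauge K v / (gauge K u + gauge K v)) • (gauge K v)⁻¹ • v
        = (gauge K u + gauge K v)⁻¹ • (u + v) := by
      rw [smul_smul, smul_smul, smul_add]
      congr 1
      · congr 1
        field_simp
      · congr 1
        field_simp
    rw [hcalc] at hint
    have hlt := interior_subset_gauge_lt_one K hint
    have : gauge K ((gauge K u + gauge K v)⁻¹ • (u + v)) = 1 := by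
      rw [gauge_smul_of_nonneg (inv_nonneg.mpr hsum.le), smul_eq_mul, h,
        inv_mul_cancel₀ hsum.ne']
    rw [Set.mem_setOf_eq, this] at hlt
    exact lt_irrefl _ hlt

lemma gauge_eq_sum_of_subset (hKconv : Convex ℝ K) (habs : Absorbent ℝ K) {ι : Type*}
    [DecidableEq ι] {F P : Finset ι} (hPF : P ⊆ F) (f : ι → E)
    (h : gauge K (∑ i ∈ F, f i) = ∑ i ∈ F, gauge K (f i)) :
    gauge K (∑ i ∈ P, f i) = ∑ i ∈ P, gauge K (f i) := by
  have h1 : gauge K (∑ i ∈ P, f i) ≤ ∑ i ∈ P, gauge K (f i) := my_gauge_sum_le hKconv habs _ _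
  have h2 : gauge K (∑ i ∈ F \ P, f i) ≤ ∑ i ∈ F \ P, gauge K (f i) :=
    my_gauge_sum_le hKconv habs _ _
  have hsplit : ∑ i ∈ F \ P, f i + ∑ i ∈ P, f i = ∑ i ∈ F, f i := Finset.sum_sdiff hPF
  have hsplit' : ∑ i ∈ F \ P, gauge K (f i) + ∑ i ∈ P, gauge K (f i)
      = ∑ i ∈ F, gauge K (f i) := Finset.sum_sdiff hPF
  have h3 : gauge K (∑ i ∈ F, f i) ≤ gauge K (∑ i ∈ F \ P, f i) + gauge K (∑ i ∈ P, f i) := by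
    rw [← hsplit]; exact gauge_add_le hKconv habs _ _
  linarith

end GaugeFacts

section Balanced
variable {E : Type*} [NormedAddCommGroup E] [NormedSpace ℝ E] {K : Set E}

lemma symm_convex_balanced (hKconv : Convex ℝ K) (hsymm : ∀ a ∈ K, -a ∈ K) :
    Balanced ℝ K := by
  intro a ha
  rintro y hy
  obtain ⟨z, hz, rfl⟩ := Set.mem_smul_set.mp hy
  have hab := abs_le.mp (by rwa [Real.norm_eq_abs] at ha)
  have h1 : 0 ≤ (1+a)/2 := by linarith [hab.1]
  have h2 : 0 ≤ (1-a)/2 := by linarith [hab.2]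
  have hmem := hKconv hz (hsymm z hz) h1 h2 (by ring)
  have hcalc : ((1+a)/2) • z + ((1-a)/2) • (-z) = a • z := by
    rw [smul_neg, ← sub_eq_add_neg, ← sub_smul]
    congr 1
    ring
  rwa [hcalc] at hmem

end Balanced


/-- The `K`-length of the closed polygon with vertices `x 0, …, x (m-1)`. -/
noncomputable def KLength {n : ℕ} (K : Set (EuclideanSpace ℝ (Fin n))) (m : ℕ)
    (x : ℕ → EuclideanSpace ℝ (Fin n)) : ℝ :=
  ∑ i ∈ Finset.range m, gauge K (x ((i + 1) % m) - x i)

/-- Equality case for a strictly convex centrally symmetric body `K`: if the vertices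
`x 0, …, x (m-1)` (`m ≥ 2`, consecutive vertices distinct) lie outside the interior of
`K`, `0` lies in their convex hull, and the closed polygon has `K`-length exactly `4`,
then `m = 2` and the polygon consists of two antipodal boundary points of `K`. -/
theorem stmt4 {n m : ℕ} (K : Set (EuclideanSpace ℝ (Fin n)))
    (hKconv : Convex ℝ K) (hKcpt : IsCompact K) (hK0 : (0 : EuclideanSpace ℝ (Fin n)) ∈ interior K)
    (hKsymm : K = -K) (hKstrict : StrictConvex ℝ K) (hm : 2 ≤ m)
    (x : ℕ → EuclideanSpace ℝ (Fin n))
    (hout : ∀ i < m, 1 ≤ gauge K (x i))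
    (hdist : ∀ i < m, x ((i + 1) % m) ≠ x i)
    (h0 : (0 : EuclideanSpace ℝ (Fin n)) ∈ convexHull ℝ (x '' Set.Iio m))
    (hlen : KLength K m x = 4) :
    m = 2 ∧ x 1 = -x 0 ∧ gauge K (x 0) = 1 := by
  classical
  have hm0 : 0 < m := by omega
  have hnhds : K ∈ 𝓝 0 := mem_interior_iff_mem_nhds.1 hK0
  have habs : Absorbent ℝ K := absorbent_nhds_zero hnhds
  have hsymm : ∀ a ∈ K, -a ∈ K := fun a ha => by
    rw [hKsymm]; exact Set.neg_mem_neg.mpr ha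
  have hneg : ∀ a, gauge K (-a) = gauge K a := gauge_neg hsymm
  have hbal : Balanced ℝ K := symm_convex_balanced hKconv hsymm
  have hbdd : Bornology.IsVonNBounded ℝ K :=
    (NormedSpace.isVonNBounded_iff _).mpr hKcpt.isBounded
  have hgpos : ∀ a : EuclideanSpace ℝ (Fin n), a ≠ 0 → 0 < gauge K a :=
    fun a ha => (gauge_pos habs hbdd).mpr ha
  have hgsub : ∀ a b : EuclideanSpace ℝ (Fin n), gauge K (a - b) = gauge K (b - a) :=
    fun a b => by rw [← neg_sub, hneg]
  have hsub3 : ∀ a b c : EuclideanSpace ℝ (Fin n),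
      gauge K (a - c) ≤ gauge K (a - b) + gauge K (b - c) := fun a b c => by
    have h := gauge_add_le hKconv habs (a - b) (b - c)
    rwa [sub_add_sub_cancel] at h
  -- edge lengths and partial sums
  set e : ℕ → ℝ := fun i => gauge K (x ((i+1)%m) - x i) with hedef
  set s : ℕ → ℝ := fun k => ∑ i ∈ Finset.range k, e i with hsdef
  have henn : ∀ i, 0 ≤ e i := fun i => gauge_nonneg _
  have hsnn : ∀ k, 0 ≤ s k := fun k => Finset.sum_nonneg fun i _ => henn i
  have hsmono : ∀ {i j : ℕ}, i ≤ j → s i ≤ s j := fun {i j} hij =>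
    Finset.sum_le_sum_of_subset_of_nonneg (Finset.range_subset_range.mpr hij) fun k _ _ => henn k
  have hs4 : s m = 4 := by
    simp only [KLength] at hlen
    exact hlen
  have hs0 : s 0 = 0 := by simp [hsdef]
  have hssucc : ∀ k, s (k+1) = s k + e k := fun k => Finset.sum_range_succ e k
  -- arc triangle inequality
  have harc : ∀ i, i < m → ∀ j, i ≤ j → j ≤ m → gauge K (x (j % m) - x i) ≤ s j - s i := by
    intro i him j hij hjm
    induction j, hij using Nat.le_induction with
    | base =>
      rw [Nat.mod_eq_of_lt him, sub_self, sub_self, gauge_zero]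
    | succ j hij ih =>
      have hjm' : j < m := by omega
      have ihb := ih (by omega)
      calc gauge K (x ((j+1) % m) - x i)
          ≤ gauge K (x ((j+1) % m) - x (j % m)) + gauge K (x (j % m) - x i) := hsub3 _ _ _
        _ ≤ e j + (s j - s i) := by
            rw [Nat.mod_eq_of_lt hjm'] at ihb ⊢
            exact add_le_add le_rfl ihb
        _ = s (j+1) - s i := by rw [hssucc j]; ring
  have harc' : ∀ i j, i ≤ j → j < m → gauge K (x j - x i) ≤ s j - s i := by
    intro i j hij hjm
    have h := harc i (lt_of_le_of_lt hij hjm) j hij hjm.le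
    rwa [Nat.mod_eq_of_lt hjm] at h
  have hwrap : ∀ j, j < m → gauge K (x 0 - x j) ≤ 4 - s j := by
    intro j hj
    have h := harc j hj m hj.le le_rfl
    rwa [Nat.mod_self, hs4] at h
  -- the finset of vertices and index selection
  set F : Finset (EuclideanSpace ℝ (Fin n)) := (Finset.range m).image x with hFdef
  have hmemF : ∀ y ∈ F, ∃ i, i < m ∧ x i = y := by
    intro y hy
    obtain ⟨i, hi, hxi⟩ := Finset.mem_image.mp hy
    exact ⟨i, Finset.mem_range.mp hi, hxi⟩
  set J : EuclideanSpace ℝ (Fin n) → ℕ :=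
    fun y => if h : ∃ i, i < m ∧ x i = y then h.choose else 0 with hJdef
  have hJ : ∀ y ∈ F, J y < m ∧ x (J y) = y := by
    intro y hy
    have h := hmemF y hy
    simp only [hJdef, dif_pos h]
    exact h.choose_spec
  -- convex hull weights
  have himg : x '' Set.Iio m = ↑F := by
    rw [hFdef, Finset.coe_image, Finset.coe_range]
  rw [himg] at h0
  obtain ⟨w, hw0, hw1, hwc⟩ := Finset.mem_convexHull.mp h0
  have hsum0 : ∑ y ∈ F, w y • y = 0 := by
    rw [Finset.centerMass_eq_of_sum_1 _ _ hw1] at hwc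
    simpa using hwc
  -- circle positions and kernel distance
  set t : EuclideanSpace ℝ (Fin n) → ℝ := fun y => s (J y) / 4 with htdef
  set D : EuclideanSpace ℝ (Fin n) → EuclideanSpace ℝ (Fin n) → ℝ :=
    fun y z => 4 * RB (t y - t z) with hDdef
  have hchord : ∀ y ∈ F, ∀ z ∈ F, gauge K (y - z) ≤ D y z := by
    have H : ∀ i j, i ≤ j → j < m → gauge K (x j - x i) ≤ 4 * RB ((s j - s i)/4) := by
      intro i j hij hjm
      have h0' : 0 ≤ s j - s i := by linarith [hsmono hij]
      have h4' : s j - s i ≤ 4 := by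
        have := hsmono hjm.le
        rw [hs4] at this
        linarith [hsnn i]
      have hf : gauge K (x j - x i) ≤ s j - s i := harc' i j hij hjm
      have hw : gauge K (x j - x i) ≤ 4 - (s j - s i) := by
        rw [hgsub]
        have h1 : gauge K (x i - x j) ≤ gauge K (x i - x 0) + gauge K (x 0 - x j) :=
          hsub3 _ _ _
        have h2 : gauge K (x i - x 0) ≤ s i := by
          have := harc' 0 i (Nat.zero_le i) (lt_of_le_of_lt hij hjm)
          rwa [hs0, sub_zero] at this
        have h3 := hwrap j hjm
        linarith
      rw [RB_eq (by linarith : (0:ℝ) ≤ (s j - s i)/4) (by linarith : (s j - s i)/4 ≤ 1)]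
      rcases le_total ((s j - s i)/4) (1 - (s j - s i)/4) with hc | hc
      · rw [min_eq_left hc]; linarith
      · rw [min_eq_right hc]; linarith
    intro y hy z hz
    obtain ⟨hJy, hxy⟩ := hJ y hy
    obtain ⟨hJz, hxz⟩ := hJ z hz
    have htyz : t y - t z = (s (J y) - s (J z))/4 := by
      simp only [htdef]; ring
    rcases le_total (J y) (J z) with hle | hle
    · have h := H (J y) (J z) hle hJz
      rw [hxy, hxz] at h
      rw [hgsub y z]
      calc gauge K (z - y) ≤ 4 * RB ((s (J z) - s (J y))/4) := h
        _ = D y z := by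
            rw [hDdef]
            simp only
            rw [htyz, show (s (J y) - s (J z))/4 = -((s (J z) - s (J y))/4) by ring, RB_neg]
    · have h := H (J z) (J y) hle hJy
      rw [hxy, hxz] at h
      calc gauge K (y - z) ≤ 4 * RB ((s (J y) - s (J z))/4) := h
        _ = D y z := by rw [hDdef]; simp only; rw [htyz]
  -- outside bound
  have hyF1 : ∀ y ∈ F, 1 ≤ gauge K y := by
    intro y hy
    obtain ⟨i, him, rfl⟩ := hmemF y hy
    exact hout i him
  have hrep : ∀ y, ∑ z ∈ F, w z • (y - z) = y := by
    intro y
    simp only [smul_sub]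
    rw [Finset.sum_sub_distrib, ← Finset.sum_smul, hw1, one_smul, hsum0, sub_zero]
  have hBdef : ∀ y, ∑ z ∈ F, gauge K (w z • (y - z)) = ∑ z ∈ F, w z * gauge K (y - z) := by
    intro y
    refine Finset.sum_congr rfl fun z hz => ?_
    rw [gauge_smul_of_nonneg (hw0 z hz), smul_eq_mul]
  have hAB : ∀ y ∈ F, gauge K y ≤ ∑ z ∈ F, w z * gauge K (y - z) := by
    intro y hy
    conv_lhs => rw [← hrep y]
    rw [← hBdef y]
    exact my_gauge_sum_le hKconv habs F _
  have hBC : ∀ y ∈ F, (∑ z ∈ F, w z * gauge K (y - z)) ≤ ∑ z ∈ F, w z * D y z := by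
    intro y hy
    exact Finset.sum_le_sum fun z hz => mul_le_mul_of_nonneg_left (hchord y hy z hz) (hw0 z hz)
  have htot : ∑ y ∈ F, w y * ∑ z ∈ F, w z * D y z ≤ 1 := by
    have hcb := circle_bound F w t
    have hrw : ∑ y ∈ F, w y * ∑ z ∈ F, w z * D y z
        = 4 * ∑ y ∈ F, ∑ z ∈ F, w y * w z * RB (t y - t z) := by
      rw [Finset.mul_sum]
      refine Finset.sum_congr rfl fun y _ => ?_
      rw [Finset.mul_sum, Finset.mul_sum]
      refine Finset.sum_congr rfl fun z _ => ?_
      rw [hDdef]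
      simp only
      ring
    rw [hrw]
    rw [hw1] at hcb
    norm_num at hcb
    linarith
  have hC1 : ∀ y ∈ F, 1 ≤ ∑ z ∈ F, w z * D y z := fun y hy =>
    le_trans (le_trans (hyF1 y hy) (hAB y hy)) (hBC y hy)
  have hption : ∀ y ∈ F, w y * ((∑ z ∈ F, w z * D y z) - 1) = 0 := by
    have hnn2 : ∀ y ∈ F, 0 ≤ w y * ((∑ z ∈ F, w z * D y z) - 1) := fun y hy =>
      mul_nonneg (hw0 y hy) (by linarith [hC1 y hy])
    have hsumle : ∑ y ∈ F, w y * ((∑ z ∈ F, w z * D y z) - 1) ≤ 0 := by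
      have hexpand : ∑ y ∈ F, w y * ((∑ z ∈ F, w z * D y z) - 1)
          = (∑ y ∈ F, w y * ∑ z ∈ F, w z * D y z) - 1 := by
        simp only [mul_sub, mul_one]
        rw [Finset.sum_sub_distrib, hw1]
      rw [hexpand]
      linarith [htot]
    intro y hy
    exact (Finset.sum_eq_zero_iff_of_nonneg hnn2).mp
      (le_antisymm hsumle (Finset.sum_nonneg hnn2)) y hy
  set S : Finset (EuclideanSpace ℝ (Fin n)) := F.filter (fun y => 0 < w y) with hSdef
  have hSF : S ⊆ F := Finset.filter_subset _ _
  have hSw : ∀ y ∈ S, 0 < w y := fun y hy => (Finset.mem_filter.mp hy).2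
  have hwS0 : ∀ y ∈ F, y ∉ S → w y = 0 := by
    intro y hy hyS
    by_contra hne
    exact hyS (Finset.mem_filter.mpr ⟨hy, lt_of_le_of_ne (hw0 y hy) (Ne.symm hne)⟩)
  have hgS1 : ∀ y ∈ S, gauge K y = 1
      ∧ (∑ z ∈ F, w z * gauge K (y - z)) = ∑ z ∈ F, w z * D y z
      ∧ gauge K y = ∑ z ∈ F, w z * gauge K (y - z) := by
    intro y hy
    have hyF := hSF hy
    have hCeq : (∑ z ∈ F, w z * D y z) = 1 := by
      have h := hption y hyF
      rcases mul_eq_zero.mp h with h | h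
      · exact absurd h (ne_of_gt (hSw y hy))
      · linarith
    have h1 := hyF1 y hyF
    have h2 := hAB y hyF
    have h3 := hBC y hyF
    exact ⟨by linarith, by linarith, by linarith⟩
  have hDgauge : ∀ y ∈ S, ∀ z ∈ S, D y z = gauge K (y - z) := by
    intro y hy z hz
    obtain ⟨_, hBCeq, _⟩ := hgS1 y hy
    have hzero : ∑ z' ∈ F, w z' * (D y z' - gauge K (y - z')) = 0 := by
      simp only [mul_sub]
      rw [Finset.sum_sub_distrib, ← hBCeq, sub_self]
    have hnn3 : ∀ z' ∈ F, 0 ≤ w z' * (D y z' - gauge K (y - z')) := fun z' hz' =>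
      mul_nonneg (hw0 z' hz') (by linarith [hchord y (hSF hy) z' hz'])
    have h := (Finset.sum_eq_zero_iff_of_nonneg hnn3).mp hzero z (hSF hz)
    rcases mul_eq_zero.mp h with h | h
    · exact absurd h (ne_of_gt (hSw z hz))
    · linarith
  have halign : ∀ y ∈ S,
      gauge K (∑ z ∈ F, w z • (y - z)) = ∑ z ∈ F, gauge K (w z • (y - z)) := by
    intro y hy
    rw [hrep y, hBdef y]
    exact (hgS1 y hy).2.2
  have hSne : ∃ y, y ∈ S := by
    by_contra hcon
    push_neg at hcon
    have h := Finset.sum_eq_zero (fun y hy => hwS0 y hy (hcon y))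
    rw [hw1] at h
    norm_num at h
  obtain ⟨y₀, hy₀⟩ := hSne
  have hw1S : ∑ z ∈ S, w z = 1 := by
    rw [← hw1]
    exact Finset.sum_subset hSF (fun z hz hzS => hwS0 z hz hzS)
  have hsum0S : ∑ z ∈ S, w z • z = 0 := by
    rw [← hsum0]
    exact Finset.sum_subset hSF (fun z hz hzS => by rw [hwS0 z hz hzS, zero_smul])
  have hz₀ex : ∃ z₀ ∈ S, z₀ ≠ y₀ := by
    by_contra hcon
    push_neg at hcon
    have hSsing : S = {y₀} := Finset.eq_singleton_iff_unique_mem.mpr ⟨hy₀, hcon⟩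
    rw [hSsing] at hsum0S hw1S
    rw [Finset.sum_singleton] at hsum0S hw1S
    rw [hw1S, one_smul] at hsum0S
    have h := (hgS1 y₀ hy₀).1
    rw [hsum0S, gauge_zero] at h
    norm_num at h
  obtain ⟨z₀, hz₀S, hz₀ne⟩ := hz₀ex
  have hpair : ∀ z₁ ∈ S, ∀ z₂ ∈ S, z₁ ≠ z₂ →
      gauge K (w z₁ • (y₀ - z₁) + w z₂ • (y₀ - z₂))
      = gauge K (w z₁ • (y₀ - z₁)) + gauge K (w z₂ • (y₀ - z₂)) := by
    intro z₁ hz₁ z₂ hz₂ hne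
    have hP : ({z₁, z₂} : Finset (EuclideanSpace ℝ (Fin n))) ⊆ F := by
      intro a ha
      rcases Finset.mem_insert.mp ha with rfl | ha
      · exact hSF hz₁
      · rw [Finset.mem_singleton.mp ha]; exact hSF hz₂
    have h := gauge_eq_sum_of_subset hKconv habs hP (fun z => w z • (y₀ - z)) (halign y₀ hy₀)
    rwa [Finset.sum_pair hne, Finset.sum_pair hne] at h
  have hcolaux : ∀ z, ∃ rz : ℝ, z ∈ S → z = y₀ + rz • (z₀ - y₀) := by
    intro z
    by_cases hz : z ∈ S
    · by_cases hzy : z = y₀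
      · exact ⟨0, fun _ => by rw [hzy, zero_smul, add_zero]⟩
      by_cases hzz : z = z₀
      · refine ⟨1, fun _ => by rw [hzz, one_smul]; abel⟩
      have hu0 : w z₀ • (y₀ - z₀) ≠ 0 :=
        smul_ne_zero (ne_of_gt (hSw z₀ hz₀S)) (sub_ne_zero.mpr (Ne.symm hz₀ne))
      have hv0 : w z • (y₀ - z) ≠ 0 :=
        smul_ne_zero (ne_of_gt (hSw z hz)) (sub_ne_zero.mpr (fun h => hzy h.symm))
      obtain ⟨c, hc, hcv⟩ := gauge_strict_align hKconv hKcpt hK0 hKstrict hu0 hv0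
        (hpair z₀ hz₀S z hz (fun h => hzz h.symm))
      refine ⟨(c * w z₀)/(w z), fun _ => ?_⟩
      have hwz : w z ≠ 0 := ne_of_gt (hSw z hz)
      rw [smul_smul] at hcv
      have h2 : y₀ - z = ((c * w z₀)/(w z)) • (y₀ - z₀) := by
        have h3 := congrArg (fun v => (w z)⁻¹ • v) hcv
        simp only [smul_smul] at h3
        rw [inv_mul_cancel₀ hwz, one_smul] at h3
        rw [h3]
        congr 1
        field_simp
      have h4 : z = y₀ - ((c * w z₀)/(w z)) • (y₀ - z₀) := by
        rw [← h2]; abel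
      conv_lhs => rw [h4]
      rw [sub_eq_add_neg, ← smul_neg, neg_sub]
    · exact ⟨0, fun h => absurd h hz⟩
  choose r hr using hcolaux
  set d : EuclideanSpace ℝ (Fin n) := z₀ - y₀ with hddef
  have hd0 : d ≠ 0 := sub_ne_zero.mpr hz₀ne
  have hsplit : ∑ z ∈ S, w z • z = (∑ z ∈ S, w z) • y₀ + (∑ z ∈ S, w z * r z) • d := by
    rw [Finset.sum_smul, Finset.sum_smul, ← Finset.sum_add_distrib]
    refine Finset.sum_congr rfl fun z hz => ?_
    have hz' : w z • z = w z • (y₀ + r z • d) := by rw [← hr z hz]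
    rw [hz', smul_add, smul_smul]
  have hT0 : y₀ + (∑ z ∈ S, w z * r z) • d = 0 := by
    rw [← one_smul ℝ y₀, ← hw1S, ← hsplit, hsum0S]
  have hy₀d : y₀ = (-(∑ z ∈ S, w z * r z)) • d := by
    rw [neg_smul]
    exact eq_neg_of_add_eq_zero_left hT0
  have hzd : ∀ z ∈ S, z = (r z - (∑ z' ∈ S, w z' * r z')) • d := by
    intro z hz
    conv_lhs => rw [hr z hz]
    rw [hy₀d, ← add_smul]
    congr 1
    ring
  have hgd := hgpos d hd0
  have habsrho : ∀ z ∈ S, |r z - (∑ z' ∈ S, w z' * r z')| * gauge K d = 1 := by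
    intro z hz
    have h1 := (hgS1 z hz).1
    have h2 : gauge K ((r z - (∑ z' ∈ S, w z' * r z')) • d) = 1 := by
      rw [← hzd z hz]; exact h1
    rwa [gauge_smul hbal, Real.norm_eq_abs] at h2
  have habseq : |r y₀ - (∑ z' ∈ S, w z' * r z')| = |r z₀ - (∑ z' ∈ S, w z' * r z')| :=
    mul_right_cancel₀ (ne_of_gt hgd) ((habsrho y₀ hy₀).trans (habsrho z₀ hz₀S).symm)
  have hz₀y₀ : z₀ = -y₀ := by
    rcases abs_eq_abs.mp habseq with heq | heq
    · exfalso
      apply hz₀ne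
      rw [hzd z₀ hz₀S, hzd y₀ hy₀, heq]
    · rw [hzd z₀ hz₀S, hzd y₀ hy₀, ← neg_smul]
      congr 1
      linarith [heq]
  have hnbS : -y₀ ∈ S := by rw [← hz₀y₀]; exact hz₀S
  have hgb : gauge K y₀ = 1 := (hgS1 y₀ hy₀).1
  have hb0 : y₀ ≠ 0 := by
    intro h; rw [h, gauge_zero] at hgb; norm_num at hgb
  have hbne : y₀ ≠ -y₀ := by
    intro h
    apply hb0
    have h2 : y₀ + y₀ = 0 := eq_neg_iff_add_eq_zero.mp h
    have h3 : (2:ℝ) • y₀ = 0 := by rw [two_smul]; exact h2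
    rcases smul_eq_zero.mp h3 with h4 | h4
    · norm_num at h4
    · exact h4
  have hDbb := hDgauge y₀ hy₀ (-y₀) hnbS
  have hg2 : gauge K (y₀ - -y₀) = 2 := by
    rw [sub_neg_eq_add, ← two_smul ℝ y₀, gauge_smul_of_nonneg (by norm_num : (0:ℝ) ≤ 2),
      smul_eq_mul, hgb]
    norm_num
  obtain ⟨hJp, hxp⟩ := hJ y₀ (hSF hy₀)
  obtain ⟨hJq, hxq⟩ := hJ (-y₀) (hSF hnbS)
  have hJpq : J y₀ ≠ J (-y₀) := by
    intro h
    apply hbne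
    have hxx : x (J y₀) = x (J (-y₀)) := by rw [h]
    rw [hxp, hxq] at hxx
    exact hxx
  have hsp4 : s (J y₀) ≤ 4 := by
    have := hsmono hJp.le; rwa [hs4] at this
  have hsq4 : s (J (-y₀)) ≤ 4 := by
    have := hsmono hJq.le; rwa [hs4] at this
  have hvabs : |s (J y₀) - s (J (-y₀))| = 2 := by
    have hDval : 4 * RB ((s (J y₀) - s (J (-y₀)))/4) = 2 := by
      have h := hDbb
      rw [hg2] at h
      have h2 : D y₀ (-y₀) = 4 * RB ((s (J y₀) - s (J (-y₀)))/4) := by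
        show (4:ℝ) * RB (t y₀ - t (-y₀)) = _
        have harg : t y₀ - t (-y₀) = (s (J y₀) - s (J (-y₀)))/4 := by
          show s (J y₀)/4 - s (J (-y₀))/4 = _
          ring
        rw [harg]
      rw [← h2]
      exact h
    have hvle : |(s (J y₀) - s (J (-y₀)))/4| ≤ 1 := by
      rw [abs_le]
      constructor
      · have := hsnn (J y₀); linarith
      · have := hsnn (J (-y₀)); linarith
    rw [RB_abs hvle] at hDval
    have habs2 : |(s (J y₀) - s (J (-y₀)))/4| = 1/2 := by
      rcases le_total |(s (J y₀) - s (J (-y₀)))/4| (1 - |(s (J y₀) - s (J (-y₀)))/4|)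
        with hc | hc
      · rw [min_eq_left hc] at hDval; linarith
      · rw [min_eq_right hc] at hDval; linarith
    have h4v : s (J y₀) - s (J (-y₀)) = 4 * ((s (J y₀) - s (J (-y₀)))/4) := by ring
    rw [h4v, abs_mul, habs2]
    norm_num
  obtain ⟨i₀, j₀, b₀, hij, hj₀m, hxi₀, hxj₀, hgb₀, hsdiff⟩ :
      ∃ i₀ j₀ b₀, i₀ < j₀ ∧ j₀ < m ∧ x i₀ = b₀ ∧ x j₀ = -b₀ ∧ gauge K b₀ = 1
        ∧ s j₀ - s i₀ = 2 := by
    rcases lt_or_gt_of_ne hJpq with h | h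
    · refine ⟨J y₀, J (-y₀), y₀, h, hJq, hxp, hxq, hgb, ?_⟩
      have hmono := hsmono h.le
      rcases abs_cases (s (J y₀) - s (J (-y₀))) with ⟨h1, h2⟩ | ⟨h1, h2⟩ <;>
        [linarith [hvabs]; linarith [hvabs]]
    · refine ⟨J (-y₀), J y₀, -y₀, h, hJp, hxq, ?_, ?_, ?_⟩
      · rw [neg_neg]; exact hxp
      · rw [hneg]; exact hgb
      · have hmono := hsmono h.le
        rcases abs_cases (s (J y₀) - s (J (-y₀))) with ⟨h1, h2⟩ | ⟨h1, h2⟩ <;>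
          [linarith [hvabs]; linarith [hvabs]]
  have hgb₀2 : gauge K (b₀ - -b₀) = 2 := by
    rw [sub_neg_eq_add, ← two_smul ℝ, gauge_smul_of_nonneg (by norm_num : (0:ℝ) ≤ 2),
      smul_eq_mul, hgb₀]
    norm_num
  have hkey : ∀ k, k < m → ∀ cc : EuclideanSpace ℝ (Fin n), gauge K cc = 1 →
      (cc = b₀ ∨ cc = -b₀) → gauge K (x k - cc) + gauge K (-cc - x k) ≤ 2 →
      (x k = b₀ ∨ x k = -b₀) := by
    intro k hk cc hgcc hcb hle
    by_cases h1 : x k = cc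
    · rcases hcb with h | h
      · left; rw [h1, h]
      · right; rw [h1, h]
    by_cases h2 : x k = -cc
    · rcases hcb with h | h
      · right; rw [h2, h]
      · left; rw [h2, h, neg_neg]
    exfalso
    have hsum2 : (x k - cc) + (-cc - x k) = -((2:ℝ) • cc) := by
      rw [two_smul]
      abel
    have hgsum : gauge K ((x k - cc) + (-cc - x k)) = 2 := by
      rw [hsum2, hneg, gauge_smul_of_nonneg (by norm_num : (0:ℝ) ≤ 2), smul_eq_mul, hgcc]
      norm_num
    have htri := gauge_add_le hKconv habs (x k - cc) (-cc - x k)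
    have heqtri : gauge K ((x k - cc) + (-cc - x k))
        = gauge K (x k - cc) + gauge K (-cc - x k) := by
      rw [hgsum]; linarith
    have hv0' : -cc - x k ≠ 0 := sub_ne_zero.mpr (fun h => h2 h.symm)
    obtain ⟨c', hc', hcv⟩ := gauge_strict_align hKconv hKcpt hK0 hKstrict
      (sub_ne_zero.mpr h1) hv0' heqtri
    have h1c : (0:ℝ) < 1 + c' := by linarith
    have hstep : x k + c' • x k = c' • cc - cc := by
      calc x k + c' • x k
          = x k + c' • x k + ((-cc - x k) - c' • (x k - cc)) := by
            rw [← hcv, sub_self, add_zero]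
        _ = c' • cc - cc := by rw [smul_sub]; abel
    have hstep2 : (1+c') • x k = (c' - 1) • cc := by
      rw [add_smul, one_smul, sub_smul, one_smul]
      exact hstep
    have hxk : x k = ((1+c')⁻¹ * (c'-1)) • cc := by
      have h7 := congrArg (fun v : EuclideanSpace ℝ (Fin n) => (1+c')⁻¹ • v) hstep2
      simp only [smul_smul] at h7
      rw [inv_mul_cancel₀ h1c.ne', one_smul] at h7
      exact h7
    have htau : |(1+c')⁻¹ * (c'-1)| < 1 := by
      have habs' : |(1+c')⁻¹ * (c'-1)| = |c'-1| / (1+c') := by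
        rw [abs_mul, abs_inv, abs_of_pos h1c]
        ring
      rw [habs', div_lt_one h1c]
      rcases abs_cases (c'-1) with ⟨hh1, hh2⟩ | ⟨hh1, hh2⟩ <;> [linarith; linarith]
    have houtk := hout k hk
    rw [hxk, gauge_smul hbal, Real.norm_eq_abs, hgcc, mul_one] at houtk
    linarith
  have hvert : ∀ k, k < m → x k = b₀ ∨ x k = -b₀ := by
    intro k hk
    have hi₀m : i₀ < m := lt_trans hij hj₀m
    by_cases hcase : i₀ ≤ k ∧ k ≤ j₀
    · apply hkey k hk b₀ hgb₀ (Or.inl rfl)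
      have hb1 : gauge K (x k - b₀) ≤ s k - s i₀ := by
        rw [← hxi₀]; exact harc' i₀ k hcase.1 hk
      have hb2 : gauge K (-b₀ - x k) ≤ s j₀ - s k := by
        rw [← hxj₀]; exact harc' k j₀ hcase.2 hj₀m
      linarith
    · push_neg at hcase
      apply hkey k hk (-b₀) (by rw [hneg]; exact hgb₀) (Or.inr rfl)
      rw [neg_neg, show -b₀ = x j₀ from hxj₀.symm, show b₀ = x i₀ from hxi₀.symm]
      rcases Nat.lt_or_ge k i₀ with hki | hki
      · have hb1 : gauge K (x k - x j₀) ≤ s k + (4 - s j₀) := by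
          calc gauge K (x k - x j₀)
              ≤ gauge K (x k - x 0) + gauge K (x 0 - x j₀) := hsub3 _ _ _
            _ ≤ s k + (4 - s j₀) := by
                have hA : gauge K (x k - x 0) ≤ s k := by
                  have := harc' 0 k (Nat.zero_le k) hk
                  rwa [hs0, sub_zero] at this
                have hB := hwrap j₀ hj₀m
                linarith
        have hb2 : gauge K (x i₀ - x k) ≤ s i₀ - s k := harc' k i₀ hki.le hi₀m
        linarith
      · have hjk : j₀ < k := hcase hki
        have hb1 : gauge K (x k - x j₀) ≤ s k - s j₀ := harc' j₀ k hjk.le hk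
        have hb2 : gauge K (x i₀ - x k) ≤ s i₀ + (4 - s k) := by
          calc gauge K (x i₀ - x k)
              ≤ gauge K (x i₀ - x 0) + gauge K (x 0 - x k) := hsub3 _ _ _
            _ ≤ s i₀ + (4 - s k) := by
                have hA : gauge K (x i₀ - x 0) ≤ s i₀ := by
                  have := harc' 0 i₀ (Nat.zero_le _) hi₀m
                  rwa [hs0, sub_zero] at this
                have hB := hwrap k hk
                linarith
        linarith
  have hedge : ∀ k, k < m → e k = 2 := by
    intro k hk
    have hk1 : (k+1) % m < m := Nat.mod_lt _ hm0
    have h1 := hvert k hk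
    have h2 := hvert ((k+1)%m) hk1
    have hne := hdist k hk
    show gauge K (x ((k+1)%m) - x k) = 2
    rcases h1 with ha | ha <;> rcases h2 with hb | hb
    · exact absurd (hb.trans ha.symm) hne
    · rw [ha, hb, show -b₀ - b₀ = -(b₀ - -b₀) by abel, hneg, hgb₀2]
    · rw [ha, hb, sub_neg_eq_add, show b₀ + b₀ = b₀ - -b₀ by abel, hgb₀2]
    · exact absurd (hb.trans ha.symm) hne
  have hm2 : m = 2 := by
    have hsum : s m = 2 * m := by
      show ∑ i ∈ Finset.range m, e i = 2 * m
      have hcongr : ∀ i ∈ Finset.range m, e i = 2 :=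
        fun i hi => hedge i (Finset.mem_range.mp hi)
      rw [Finset.sum_congr rfl hcongr, Finset.sum_const, Finset.card_range, nsmul_eq_mul]
      ring
    rw [hs4] at hsum
    have hmr : (m:ℝ) = 2 := by linarith
    exact_mod_cast hmr
  have h0v := hvert 0 (by omega)
  have h1v := hvert 1 (by omega)
  have hne01 : x 1 ≠ x 0 := by
    have hne := hdist 0 (by omega)
    rwa [show (0+1) % m = 1 from Nat.mod_eq_of_lt (by omega)] at hne
  refine ⟨hm2, ?_, ?_⟩
  · rcases h0v with ha | ha <;> rcases h1v with hb | hb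
    · exact absurd (hb.trans ha.symm) hne01
    · rw [ha, hb]
    · rw [ha, hb, neg_neg]
    · exact absurd (hb.trans ha.symm) hne01
  · rcases h0v with ha | ha
    · rw [ha]; exact hgb₀
    · rw [ha, hneg]; exact hgb₀
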